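/- If Z satisfies Zᵀ𝐀Z ⪯ 𝐐 with 𝐀 ≻ 0 and 𝐐 ⪰ 0, then Z can be written as Z = 𝐀^{-1/2} 𝚼 𝐐^{1/2} for some matrix 𝚼 with 𝚼ᵀ𝚼 ⪯ I. -/

import Mathlib

open Matrix

namespace Matrix.PosSemidef

open scoped ComplexOrder

/-- The positive semidefinite square root of a positive semidefinite matrix, as defined in
Mathlib of December 2024 (removed since). -/
noncomputable def sqrt {n 𝕜 : Type*} [Fintype n] [RCLike 𝕜] [DecidableEq n]
    {A : Matrix n n 𝕜} (hA : PosSemidef A) : Matrix n n 𝕜 :=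
  hA.1.eigenvectorUnitary.1 * diagonal ((↑) ∘ (√·) ∘ hA.1.eigenvalues) *
  (star hA.1.eigenvectorUnitary : Matrix n n 𝕜)

lemma posSemidef_sqrt {n : Type*} [Fintype n] [DecidableEq n]
    {A : Matrix n n ℝ} (hA : PosSemidef A) : PosSemidef hA.sqrt := by
  unfold sqrt
  have hnn : ∀ i, (0:ℝ) ≤ ((↑) ∘ (√·) ∘ hA.1.eigenvalues : n → ℝ) i := by
    intro i; simp [Real.sqrt_nonneg]
  have := (posSemidef_diagonal_iff.mpr hnn).mul_mul_conjTranspose_same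
    (hA.1.eigenvectorUnitary : Matrix n n ℝ)
  rwa [← star_eq_conjTranspose, ← Unitary.coe_star] at this

lemma sqrt_mul_self {n : Type*} [Fintype n] [DecidableEq n]
    {A : Matrix n n ℝ} (hA : PosSemidef A) : hA.sqrt * hA.sqrt = A := by
  have hU'U : (star hA.1.eigenvectorUnitary : Matrix n n ℝ) * hA.1.eigenvectorUnitary = 1 :=
    mem_unitaryGroup_iff'.mp hA.1.eigenvectorUnitary.2
  unfold sqrt
  conv_rhs => rw [hA.1.spectral_theorem, Unitary.conjStarAlgAut_apply]
  simp only [Matrix.mul_assoc]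
  rw [← Matrix.mul_assoc _ (hA.1.eigenvectorUnitary : Matrix n n ℝ), hU'U, Matrix.one_mul,
    ← Matrix.mul_assoc (diagonal _) (diagonal _), diagonal_mul_diagonal]
  congr 3
  funext i
  simp [Real.mul_self_sqrt (hA.eigenvalues_nonneg i)]

end Matrix.PosSemidef

private lemma aux_neg_psd_zero {m k : ℕ} (N : Matrix (Fin m) (Fin k) ℝ)
    (h2 : (-(Nᵀ * N)).PosSemidef) : N = 0 := by
  have hT : Nᵀ = Nᴴ := (conjTranspose_eq_transpose_of_trivial N).symm
  have key : ∀ x : Fin k → ℝ, N *ᵥ x = 0 := by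
    intro x
    have h1 : (0:ℝ) ≤ star x ⬝ᵥ (-(Nᴴ * N)) *ᵥ x := by
      rw [← hT]; exact h2.dotProduct_mulVec_nonneg x
    have h0 : (0:ℝ) ≤ star x ⬝ᵥ (Nᴴ * N) *ᵥ x := (posSemidef_conjTranspose_mul_self N).dotProduct_mulVec_nonneg x
    have hrw : star x ⬝ᵥ (Nᴴ * N) *ᵥ x = star (N *ᵥ x) ⬝ᵥ (N *ᵥ x) := by
      rw [← mulVec_mulVec, dotProduct_mulVec, vecMul_conjTranspose, star_star]
    rw [neg_mulVec, dotProduct_neg] at h1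
    have hz : star x ⬝ᵥ (Nᴴ * N) *ᵥ x = 0 := le_antisymm (by linarith) h0
    rw [hrw, star_trivial] at hz
    exact dotProduct_self_eq_zero.mp hz
  ext i j
  have := congrFun (key (Pi.single j 1)) i
  simpa using this

/-- if Zᵀ𝐀Z ⪯ 𝐐 with 𝐀 ≻ 0 and 𝐐 ⪰ 0, then
Z = 𝐀^{-1/2} 𝚼 𝐐^{1/2} for some 𝚼 with 𝚼ᵀ𝚼 ⪯ I. -/
theorem stmt_5 (p n : ℕ) (A : Matrix (Fin p) (Fin p) ℝ) (Q : Matrix (Fin n) (Fin n) ℝ)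
    (hA : A.PosDef) (hQ : Q.PosSemidef) (Z : Matrix (Fin p) (Fin n) ℝ)
    (h : (Q - Zᵀ * A * Z).PosSemidef) :
    ∃ Υ : Matrix (Fin p) (Fin n) ℝ,
      ((1 : Matrix (Fin n) (Fin n) ℝ) - Υᵀ * Υ).PosSemidef ∧
        Z = (hA.posSemidef.sqrt)⁻¹ * Υ * hQ.sqrt := by
  classical
  set S : Matrix (Fin n) (Fin n) ℝ := hQ.sqrt with hSdef
  set R : Matrix (Fin p) (Fin p) ℝ := hA.posSemidef.sqrt with hRdef
  have hS : S.PosSemidef := hQ.posSemidef_sqrt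
  have hSS : S * S = Q := hQ.sqrt_mul_self
  have hRR : R * R = A := hA.posSemidef.sqrt_mul_self
  have hRt : Rᵀ = R := by
    rw [← conjTranspose_eq_transpose_of_trivial]; exact hA.posSemidef.posSemidef_sqrt.1
  -- spectral data of S
  set U : Matrix (Fin n) (Fin n) ℝ := (hS.1.eigenvectorUnitary : Matrix (Fin n) (Fin n) ℝ)
    with hUdef
  set e : Fin n → ℝ := hS.1.eigenvalues with hedef
  have hUU : U * star U = 1 := mem_unitaryGroup_iff.mp hS.1.eigenvectorUnitary.2
  have hU'U : star U * U = 1 := mem_unitaryGroup_iff'.mp hS.1.eigenvectorUnitary.2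
  set C : (Fin n → ℝ) → Matrix (Fin n) (Fin n) ℝ := fun f => U * diagonal f * star U
    with hCdef
  have spec : S = C e := by
    have := hS.1.spectral_theorem
    simpa [C, RCLike.ofReal_real_eq_id] using this
  have hCmul : ∀ f g, C f * C g = C (fun i => f i * g i) := by
    intro f g
    simp only [C, Matrix.mul_assoc]
    rw [← Matrix.mul_assoc (star U) U _, hU'U, one_mul,
      ← Matrix.mul_assoc (diagonal f) (diagonal g), diagonal_mul_diagonal]
  have hCT : ∀ f, (C f)ᵀ = C f := by
    intro f
    have : (C f)ᴴ = C f := by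
      simp only [C, conjTranspose_mul, star_eq_conjTranspose, conjTranspose_conjTranspose,
        diagonal_conjTranspose, star_trivial, Matrix.mul_assoc]
    rwa [conjTranspose_eq_transpose_of_trivial] at this
  have hCone : C (fun _ => 1) = 1 := by
    simp only [C]
    rw [show (diagonal fun _ : Fin n => (1:ℝ)) = 1 from diagonal_one, mul_one, hUU]
  -- pseudoinverse data
  set d : Fin n → ℝ := fun i => if e i = 0 then 0 else (e i)⁻¹ with hddef
  set χ : Fin n → ℝ := fun i => if e i = 0 then 0 else 1 with hχdef
  set Sp : Matrix (Fin n) (Fin n) ℝ := C d with hSpdef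
  set P : Matrix (Fin n) (Fin n) ℝ := C χ with hPdef
  have hde : ∀ i, d i * e i = χ i := by
    intro i; by_cases hi : e i = 0 <;> simp [d, χ, hi, inv_mul_cancel₀]
  have hed : ∀ i, e i * d i = χ i := by
    intro i; rw [mul_comm]; exact hde i
  have heχ : ∀ i, e i * χ i = e i := by
    intro i; by_cases hi : e i = 0 <;> simp [χ, hi]
  have hχe : ∀ i, χ i * e i = e i := by
    intro i; rw [mul_comm]; exact heχ i
  have hχχ : ∀ i, χ i * χ i = χ i := by
    intro i; by_cases hi : e i = 0 <;> simp [χ, hi]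
  have hSpS : Sp * S = P := by
    rw [spec, hSpdef, hCmul]; simp only [hde]; rfl
  have hSSp : S * Sp = P := by
    rw [spec, hSpdef, hCmul]; simp only [hed]; rfl
  have hSP : S * P = S := by
    rw [spec, hPdef, hCmul]; simp only [heχ]
  have hPS : P * S = S := by
    rw [spec, hPdef, hCmul]; simp only [hχe]
  have hPP : P * P = P := by
    rw [hPdef, hCmul]; simp only [hχχ]
  -- B and the kernel fact
  set B : Matrix (Fin p) (Fin n) ℝ := R * Z with hBdef
  have hBtB : Bᵀ * B = Zᵀ * A * Z := by
    rw [hBdef, transpose_mul, hRt, Matrix.mul_assoc, ← Matrix.mul_assoc R R Z, hRR,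
      ← Matrix.mul_assoc]
  have h' : (Q - Bᵀ * B).PosSemidef := by rwa [hBtB]
  have h1mPT : ((1 : Matrix (Fin n) (Fin n) ℝ) - P)ᵀ = 1 - P := by
    rw [transpose_sub, transpose_one, hPdef, hCT]
  have h1mPS : ((1 : Matrix (Fin n) (Fin n) ℝ) - P) * S = 0 := by
    rw [sub_mul, one_mul, hPS, sub_self]
  have hS1mP : S * ((1 : Matrix (Fin n) (Fin n) ℝ) - P) = 0 := by
    rw [mul_sub, mul_one, hSP, sub_self]
  have hQ1mP : ((1 : Matrix (Fin n) (Fin n) ℝ) - P) * Q * (1 - P) = 0 := by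
    rw [← hSS, show ((1 : Matrix (Fin n) (Fin n) ℝ) - P) * (S * S) * (1 - P)
      = (((1 : Matrix (Fin n) (Fin n) ℝ) - P) * S) * (S * (1 - P)) by
        simp only [Matrix.mul_assoc], h1mPS, Matrix.zero_mul]
  set N : Matrix (Fin p) (Fin n) ℝ := B * (1 - P) with hNdef
  have hMpsd : (((1 : Matrix (Fin n) (Fin n) ℝ) - P)ᴴ * (Q - Bᵀ * B) * (1 - P)).PosSemidef :=
    h'.conjTranspose_mul_mul_same (1 - P)
  rw [conjTranspose_eq_transpose_of_trivial, h1mPT] at hMpsd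
  have hM : ((1 : Matrix (Fin n) (Fin n) ℝ) - P) * (Q - Bᵀ * B) * (1 - P) = -(Nᵀ * N) := by
    have expand : ((1 : Matrix (Fin n) (Fin n) ℝ) - P) * (Q - Bᵀ * B) * (1 - P)
        = (1 - P) * Q * (1 - P) - (1 - P) * (Bᵀ * B) * (1 - P) := by
      noncomm_ring
    rw [expand, hQ1mP, zero_sub]
    have hNN : (B * ((1 : Matrix (Fin n) (Fin n) ℝ) - P))ᵀ * (B * (1 - P))
        = (1 - P) * (Bᵀ * B) * (1 - P) := by
      rw [transpose_mul, h1mPT]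
      simp only [Matrix.mul_assoc]
    rw [hNdef, hNN]
  rw [hM] at hMpsd
  have hN0 : N = 0 := aux_neg_psd_zero N hMpsd
  have hBP : B * P = B := by
    have h0 := hN0
    rw [hNdef, Matrix.mul_sub, Matrix.mul_one] at h0
    exact (sub_eq_zero.mp h0).symm
  -- the witness
  refine ⟨B * Sp, ?_, ?_⟩
  · -- 1 - ΥᵀΥ PSD
    have hUpT : (B * Sp)ᵀ * (B * Sp) = Sp * (Bᵀ * B) * Sp := by
      rw [transpose_mul, hSpdef, hCT]
      simp only [Matrix.mul_assoc]
    have hSpQSp : Sp * Q * Sp = P := by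
      rw [← hSS, show Sp * (S * S) * Sp = (Sp * S) * (S * Sp) by simp only [Matrix.mul_assoc],
        hSpS, hSSp, hPP]
    have hsplit : (1 : Matrix (Fin n) (Fin n) ℝ) - (B * Sp)ᵀ * (B * Sp)
        = (1 - P) + Sp * (Q - Bᵀ * B) * Sp := by
      rw [hUpT, Matrix.mul_sub, Matrix.sub_mul, hSpQSp]
      abel
    rw [hsplit]
    have hpsd1 : ((1 : Matrix (Fin n) (Fin n) ℝ) - P).PosSemidef := by
      have h1mP : (1 : Matrix (Fin n) (Fin n) ℝ) - P = C (fun i => 1 - χ i) := by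
        rw [← hCone, hPdef]
        simp only [C, ← Matrix.sub_mul, ← Matrix.mul_sub, ← diagonal_sub]
      rw [h1mP]
      have hnn : ∀ i, 0 ≤ 1 - χ i := by
        intro i; by_cases hi : e i = 0 <;> simp [χ, hi]
      have := (posSemidef_diagonal_iff.mpr hnn).mul_mul_conjTranspose_same U
      rwa [← star_eq_conjTranspose] at this
    have hpsd2 : (Sp * (Q - Bᵀ * B) * Sp).PosSemidef := by
      have := h'.conjTranspose_mul_mul_same Sp
      rwa [conjTranspose_eq_transpose_of_trivial, hSpdef, hCT] at this
    exact hpsd1.add hpsd2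
  · -- Z = R⁻¹ Υ S
    have hdet : R.det ≠ 0 := by
      intro h0
      have : A.det = 0 := by rw [← hRR, det_mul, h0, mul_zero]
      exact absurd this (ne_of_gt hA.det_pos)
    have hRinv : R⁻¹ * R = 1 := nonsing_inv_mul R (isUnit_iff_ne_zero.mpr hdet)
    have : R⁻¹ * (B * Sp) * S = Z := by
      rw [Matrix.mul_assoc (R⁻¹) _ S, Matrix.mul_assoc B Sp S, hSpS, hBP, hBdef,
        ← Matrix.mul_assoc, hRinv, Matrix.one_mul]
    exact this.symm
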